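/- Let n ≥ 2 and m ≥ 2 be integers, let f ∈ R_m = ℤ[x_1, ..., x_m], and let 1 ≤ i < j ≤ m. Then 2 divides the coefficient c_{f^{2^n}}(x_i^{2^{n−1}} x_j^{2^{n−1}}) of the monomial x_i^{2^{n−1}} x_j^{2^{n−1}} in the polynomial f^{2^n}. -/

import Mathlib

open MvPolynomial

lemma expand_monomial' {σ R : Type*} [CommSemiring R] (N : ℕ) (hN : N ≠ 0) (e : σ →₀ ℕ) (r : R) :
    expand N (monomial e r) = monomial (N • e) r := by
  rw [monomial_eq, monomial_eq, map_mul, expand_C]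
  congr 1
  rw [Finsupp.prod, Finsupp.prod, map_prod, Finsupp.support_smul_eq hN]
  apply Finset.prod_congr rfl
  intro x _
  rw [map_pow, expand_X, ← pow_mul, Finsupp.smul_apply, smul_eq_mul, Nat.mul_comm]

lemma coeff_expand_zero {σ R : Type*} [CommSemiring R] (N : ℕ) (hN : N ≠ 0)
    (φ : MvPolynomial σ R) (d : σ →₀ ℕ) (i : σ) (h : ¬ N ∣ d i) :
    coeff d (expand N φ) = 0 := by
  classical
  induction φ using MvPolynomial.induction_on' with
  | monomial e r =>
    rw [expand_monomial' N hN, coeff_monomial]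
    split_ifs with he
    · exact absurd ⟨e i, by rw [← he, Finsupp.smul_apply, smul_eq_mul]⟩ h
    · rfl
  | add p q hp hq => rw [map_add, coeff_add, hp, hq, add_zero]

lemma pow_pow_two {σ : Type*} (g : MvPolynomial σ (ZMod 2)) (n : ℕ) :
    g ^ 2 ^ n = expand (2 ^ n) g := by
  haveI : Fact (Nat.Prime 2) := ⟨Nat.prime_two⟩
  induction n with
  | zero => simp [expand_one_apply]
  | succ k ih =>
    rw [pow_succ, pow_mul, ih, ← expand_zmod (p := 2), ← AlgHom.comp_apply]
    congr 1
    apply MvPolynomial.algHom_ext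
    intro x
    simp [expand_X, ← pow_mul, Nat.mul_comm]

theorem stmt_3 (n m : ℕ) (hn : 2 ≤ n) (hm : 2 ≤ m)
    (f : MvPolynomial (Fin m) ℤ) (i j : Fin m) (hij : i < j) :
    (2 : ℤ) ∣
      MvPolynomial.coeff
        (Finsupp.single i (2 ^ (n - 1)) + Finsupp.single j (2 ^ (n - 1))) (f ^ 2 ^ n) := by
  set d : Fin m →₀ ℕ := Finsupp.single i (2 ^ (n - 1)) + Finsupp.single j (2 ^ (n - 1))
  rw [show (2:ℤ) = ((2:ℕ):ℤ) by norm_num, ← ZMod.intCast_zmod_eq_zero_iff_dvd]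
  have : ((coeff d (f ^ 2 ^ n) : ℤ) : ZMod 2)
      = coeff d (map (Int.castRingHom (ZMod 2)) (f ^ 2 ^ n)) := by
    rw [coeff_map]; rfl
  rw [this, map_pow, pow_pow_two]
  apply coeff_expand_zero _ (by positivity) _ _ i
  have hdi : d i = 2 ^ (n - 1) := by
    simp [d, Finsupp.single_apply, hij.ne']
  rw [hdi]
  intro hdvd
  have h2 : 2 ^ (n - 1) < 2 ^ n := Nat.pow_lt_pow_right one_lt_two (by omega)
  have h3 := Nat.le_of_dvd (by positivity) hdvd
  omega
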